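/- Let C be a rational polytope contained in a real vector space V of dimension n which is defined over the rationals (with a fixed rational lattice, so one may take V = ℝ^n with lattice ℤ^n and the sup norm). Fix a positive integer k and a positive real number α. Then for every v ∈ C there exist points v_1,…,v_p ∈ C and positive integers m_1,…,m_p, each divisible by k, such that v is a convex linear combination of v_1,…,v_p, each (m_i/k)·v_i is an integral vector, and ‖v_i − v‖ < α/m_i for every i. -/

import Mathlib

noncomputable section

set_option maxHeartbeats 1000000

lemma dirichlet_box {ι : Type*} [Fintype ι] (x : ι → ℝ) {δ : ℝ} (hδ : 0 < δ) :
    ∃ (q : ℕ) (a : ι → ℤ), 0 < q ∧ ∀ c, |(q : ℝ) * x c - a c| ≤ δ := by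
  classical
  set N : ℕ := ⌈δ⁻¹⌉₊ with hN
  have hN0 : 0 < N := Nat.ceil_pos.2 (by positivity)
  have hNR : (0:ℝ) < N := by exact_mod_cast hN0
  have hbox : ∀ (j : ℕ) (c : ι), (⌊Int.fract ((j:ℝ) * x c) * N⌋).toNat < N := by
    intro j c
    have h1 : Int.fract ((j:ℝ) * x c) < 1 := Int.fract_lt_one _
    have h2 : ⌊Int.fract ((j:ℝ) * x c) * N⌋ < (N : ℤ) := by
      rw [Int.floor_lt]
      push_cast
      nlinarith
    omega
  let F : Fin (N ^ Fintype.card ι + 1) → (ι → Fin N) :=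
    fun j c => ⟨(⌊Int.fract ((j:ℝ) * x c) * N⌋).toNat, hbox j c⟩
  have hcard : Fintype.card (ι → Fin N) < Fintype.card (Fin (N ^ Fintype.card ι + 1)) := by
    simp [Fintype.card_fun]
  obtain ⟨j₁, j₂, hne, heq⟩ := Fintype.exists_ne_map_eq_of_card_lt F hcard
  have key : ∀ (j₁ j₂ : Fin (N ^ Fintype.card ι + 1)), (j₁:ℕ) < (j₂:ℕ) → F j₁ = F j₂ →
      ∃ (q : ℕ) (a : ι → ℤ), 0 < q ∧ ∀ c, |(q : ℝ) * x c - a c| ≤ δ := by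
    intro j₁ j₂ hlt heq
    refine ⟨(j₂ : ℕ) - (j₁ : ℕ), fun c => ⌊((j₂:ℕ):ℝ) * x c⌋ - ⌊((j₁:ℕ):ℝ) * x c⌋,
      by omega, fun c => ?_⟩
    have hfr : ∀ (j : ℕ), (⌊Int.fract ((j:ℝ) * x c) * N⌋).toNat = (F (Fin.ofNat _ j) c : ℕ) → True := fun _ _ => trivial
    have hEc : (⌊Int.fract (((j₁:ℕ):ℝ) * x c) * N⌋) = (⌊Int.fract (((j₂:ℕ):ℝ) * x c) * N⌋) := by
      have := congrFun (congrArg (fun (g : ι → Fin N) => g) heq) c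
      have h' : (F j₁ c : ℕ) = (F j₂ c : ℕ) := by rw [heq]
      have n1 : 0 ≤ ⌊Int.fract (((j₁:ℕ):ℝ) * x c) * N⌋ := by
        exact Int.floor_nonneg.2 (mul_nonneg (Int.fract_nonneg _) hNR.le)
      have n2 : 0 ≤ ⌊Int.fract (((j₂:ℕ):ℝ) * x c) * N⌋ := by
        exact Int.floor_nonneg.2 (mul_nonneg (Int.fract_nonneg _) hNR.le)
      simp only [F] at h'
      omega
    set f₁ := Int.fract (((j₁:ℕ):ℝ) * x c) with hf₁
    set f₂ := Int.fract (((j₂:ℕ):ℝ) * x c) with hf₂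
    have hb1 : (⌊f₁ * N⌋ : ℝ) ≤ f₁ * N := Int.floor_le _
    have hb2 : f₂ * N < ⌊f₂ * N⌋ + 1 := Int.lt_floor_add_one _
    have hb3 : (⌊f₂ * N⌋ : ℝ) ≤ f₂ * N := Int.floor_le _
    have hb4 : f₁ * N < ⌊f₁ * N⌋ + 1 := Int.lt_floor_add_one _
    have hdiff : |f₂ - f₁| * N < 1 := by
      have habs : |f₂ - f₁| * (N:ℝ) = |f₂ * N - f₁ * N| := by
        rw [show f₂*(N:ℝ) - f₁*N = (f₂-f₁)*N by ring, abs_mul, abs_of_nonneg hNR.le]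
      have hEr : ((⌊f₁ * (N:ℝ)⌋ : ℤ) : ℝ) = ((⌊f₂ * (N:ℝ)⌋ : ℤ) : ℝ) := by exact_mod_cast hEc
      rw [habs, abs_sub_lt_iff]
      constructor <;> nlinarith
    have hkey : ((((j₂:ℕ) - (j₁:ℕ) : ℕ)):ℝ) * x c -
        ((⌊((j₂:ℕ):ℝ) * x c⌋ - ⌊((j₁:ℕ):ℝ) * x c⌋ : ℤ) : ℝ) = f₂ - f₁ := by
      have : (((j₂:ℕ) - (j₁:ℕ) : ℕ) : ℝ) = ((j₂:ℕ):ℝ) - ((j₁:ℕ):ℝ) := by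
        push_cast [Nat.cast_sub hlt.le]; ring
      rw [this, hf₁, hf₂, Int.fract, Int.fract]
      push_cast
      ring
    rw [hkey]
    have hNinv : (1:ℝ)/N ≤ δ := by
      rw [div_le_iff₀ hNR]
      have := Nat.le_ceil (δ⁻¹)
      calc (1:ℝ) = δ * δ⁻¹ := by field_simp
      _ ≤ δ * N := by
          apply mul_le_mul_of_nonneg_left _ hδ.le
          exact_mod_cast this
    calc |f₂ - f₁| ≤ 1 / N := by
          rw [le_div_iff₀ hNR]; exact hdiff.le
    _ ≤ δ := hNinv
  rcases lt_or_gt_of_ne (show (j₁:ℕ) ≠ (j₂:ℕ) from fun h => hne (Fin.ext h)) with hlt | hlt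
  · exact key j₁ j₂ hlt heq
  · exact key j₂ j₁ hlt heq.symm

def IsRes {ι : Type*} [Fintype ι] (lam : ι → ℝ) (r : ι → ℝ) : Prop :=
  ∃ q : ℕ, 0 < q ∧ ∃ a : ι → ℤ, r = fun c => (q:ℝ) * lam c - a c

lemma isRes_add {ι : Type*} [Fintype ι] {lam r r' : ι → ℝ}
    (h : IsRes lam r) (h' : IsRes lam r') : IsRes lam (r + r') := by
  obtain ⟨q, hq, a, rfl⟩ := h
  obtain ⟨q', hq', a', rfl⟩ := h'
  refine ⟨q + q', by omega, fun c => a c + a' c, ?_⟩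
  funext c
  push_cast
  simp [Pi.add_apply]
  ring

lemma isRes_sum {ι : Type*} [Fintype ι] {κ : Type*} {lam : ι → ℝ} {s : Finset κ}
    (hs : s.Nonempty) (f : κ → ι → ℝ) (h : ∀ j ∈ s, IsRes lam (f j)) :
    IsRes lam (∑ j ∈ s, f j) := by
  induction hs using Finset.Nonempty.cons_induction with
  | singleton j => simpa using h j (by simp)
  | cons j s hj hs ih =>
      rw [Finset.sum_cons]
      exact isRes_add (h j (by simp)) (ih fun i hi => h i (by simp [hi]))

lemma isRes_small {ι : Type*} [Fintype ι] (lam : ι → ℝ) {δ : ℝ} (hδ : 0 < δ) :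
    ∃ r, IsRes lam r ∧ ‖r‖ ≤ δ := by
  obtain ⟨q, a, hq, hqa⟩ := dirichlet_box lam hδ
  refine ⟨fun c => (q:ℝ) * lam c - a c, ⟨q, hq, a, rfl⟩, ?_⟩
  rw [pi_norm_le_iff_of_nonneg hδ.le]
  intro c
  simpa [Real.norm_eq_abs] using hqa c

lemma near_inverse {ι : Type*} [Fintype ι] {lam r : ι → ℝ}
    (h : IsRes lam r) (hr4 : ‖r‖ ≤ 4⁻¹) {δ : ℝ} (hδ0 : 0 < δ) (hδr : δ < ‖r‖) :
    ∃ r', IsRes lam r' ∧ ‖r + r'‖ ≤ δ ∧ ‖r'‖ ≤ ‖r‖ + δ := by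
  obtain ⟨q, hq, a, ha⟩ := h
  obtain ⟨q₀, b, hq₀, hb⟩ := dirichlet_box r hδ0
  have hδ4 : δ < 4⁻¹ := lt_of_lt_of_le hδr hr4
  have h2 : 2 ≤ q₀ := by
    rcases Nat.lt_or_ge q₀ 2 with h1 | h1
    · exfalso
      have hq₀1 : q₀ = 1 := by omega
      subst hq₀1
      have hb0 : ∀ c, b c = 0 := by
        intro c
        have h3 := hb c
        have h4 : |r c| ≤ 4⁻¹ := by
          have := norm_le_pi_norm r c
          simpa [Real.norm_eq_abs] using this.trans hr4
        rw [Nat.cast_one, one_mul] at h3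
        have hbc : |(b c : ℝ)| < 1 := by
          have habs : |(b c : ℝ)| ≤ |r c| + |r c - b c| := by
            have := abs_sub (r c) (r c - (b c : ℝ))
            simpa using this
          linarith
        have hbz : |b c| < 1 := by
          have : ((|b c| : ℤ) : ℝ) < 1 := by rwa [← Int.cast_abs] at hbc
          exact_mod_cast this
        have := abs_lt.1 hbz
        omega
      have : ‖r‖ ≤ δ := by
        rw [pi_norm_le_iff_of_nonneg hδ0.le]
        intro c
        have h3 := hb c
        rw [hb0 c] at h3
        simpa [Real.norm_eq_abs] using h3
      linarith
    · exact h1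
  refine ⟨fun c => (((q₀ - 1) * q : ℕ) : ℝ) * lam c - ((((q₀ - 1 : ℕ) : ℤ) * a c + b c : ℤ)),
    ⟨(q₀ - 1) * q, Nat.mul_pos (by omega) hq, _, rfl⟩, ?_, ?_⟩
  · rw [pi_norm_le_iff_of_nonneg hδ0.le]
    intro c
    have h3 := hb c
    have hrc : r c = (q:ℝ) * lam c - a c := by rw [ha]
    have hcast : (((q₀ - 1) * q : ℕ) : ℝ) = ((q₀:ℝ) - 1) * q := by
      push_cast [Nat.cast_sub (by omega : 1 ≤ q₀)]
      ring
    have hgoal : (r + fun c' => (((q₀ - 1) * q : ℕ) : ℝ) * lam c' -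
        ((((q₀ - 1 : ℕ) : ℤ) * a c' + b c' : ℤ))) c = (q₀:ℝ) * r c - b c := by
      simp only [Pi.add_apply]
      rw [hrc]
      push_cast [Nat.cast_sub (by omega : 1 ≤ q₀)]
      ring
    rw [Real.norm_eq_abs, hgoal]
    exact h3
  · rw [pi_norm_le_iff_of_nonneg (by positivity)]
    intro c
    have h3 := hb c
    have hrc : r c = (q:ℝ) * lam c - a c := by rw [ha]
    have hrnorm : |r c| ≤ ‖r‖ := by
      have := norm_le_pi_norm r c
      simpa [Real.norm_eq_abs] using this
    have hval : (((q₀ - 1) * q : ℕ) : ℝ) * lam c - ((((q₀ - 1 : ℕ) : ℤ) * a c + b c : ℤ)) =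
        ((q₀:ℝ) * r c - b c) - r c := by
      rw [hrc]
      push_cast [Nat.cast_sub (by omega : 1 ≤ q₀)]
      ring
    rw [Real.norm_eq_abs, hval]
    calc |((q₀:ℝ) * r c - b c) - r c| ≤ |(q₀:ℝ) * r c - b c| + |r c| := abs_sub _ _
    _ ≤ δ + ‖r‖ := add_le_add h3 hrnorm
    _ = ‖r‖ + δ := by ring

lemma main_comb {ι : Type*} [Fintype ι] (lam : ι → ℝ) {ε : ℝ} (hε : 0 < ε) :
    ∃ (p : ℕ) (q : Fin p → ℕ) (a : Fin p → ι → ℤ) (s : Fin p → ℝ),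
      (∀ i, 0 < q i) ∧ (∀ i, 0 ≤ s i) ∧ ∑ i, s i = 1 ∧
      (∀ i c, |(q i : ℝ) * lam c - a i c| ≤ ε) ∧
      (∑ i, s i • (fun c => (q i : ℝ) * lam c - a i c)) = (0 : ι → ℝ) := by
  classical
  by_cases hrat : ∃ (q : ℕ), 0 < q ∧ ∃ a : ι → ℤ,
      (fun c => (q:ℝ) * lam c - a c) = (0 : ι → ℝ)
  · obtain ⟨q₀, hq₀, a₀, ha₀⟩ := hrat
    refine ⟨1, fun _ => q₀, fun _ => a₀, fun _ => 1, fun _ => hq₀, fun _ => zero_le_one,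
      by simp, fun i c => ?_, by simp [ha₀]⟩
    have := congrFun ha₀ c
    simp only [Pi.zero_apply] at this
    simp [this, hε.le]
  -- irrational case
  · set θ : ℝ := (min ε 1) / 4 with hθdef
    have hθ0 : 0 < θ := by
      have : 0 < min ε 1 := lt_min hε one_pos
      positivity
    have hθ4 : θ ≤ 4⁻¹ := by
      rw [hθdef]
      have : min ε 1 ≤ 1 := min_le_right _ _
      linarith
    have hθε : 2 * θ ≤ ε := by
      rw [hθdef]
      have : min ε 1 ≤ ε := min_le_left _ _
      linarith
    set Sset : Set (ι → ℝ) := {r | IsRes lam r ∧ ‖r‖ ≤ θ} with hSdef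
    have hS0 : ∀ r ∈ Sset, r ≠ (0 : ι → ℝ) := by
      rintro r ⟨⟨q, hq, a, ha⟩, -⟩ rfl
      exact hrat ⟨q, hq, a, ha.symm⟩
    obtain ⟨r₀, hr₀res, hr₀norm⟩ := isRes_small lam hθ0
    have hr₀S : r₀ ∈ Sset := ⟨hr₀res, hr₀norm⟩
    obtain ⟨bset, hbsub, hspan, hli⟩ := exists_linearIndependent ℝ Sset
    have hbfin : bset.Finite := hli.setFinite
    haveI : Fintype ↥bset := hbfin.fintype
    have hbne : bset.Nonempty := by
      by_contra hemp
      rw [Set.not_nonempty_iff_eq_empty] at hemp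
      have : r₀ ∈ Submodule.span ℝ Sset := Submodule.subset_span hr₀S
      rw [← hspan, hemp] at this
      simp only [Submodule.span_empty, Submodule.mem_bot] at this
      exact hS0 r₀ hr₀S this
    haveI : Nonempty ↥bset := hbne.to_subtype
    set W := Submodule.span ℝ (Set.range ((↑) : bset → (ι → ℝ))) with hWdef
    have hWS : W = Submodule.span ℝ Sset := by rw [hWdef, Subtype.range_coe]; exact hspan
    let Bas : Module.Basis ↥bset ℝ ↥W := Module.Basis.span hli
    let M : ℝ := Finset.univ.sup' (Finset.univ_nonempty) fun i : ↥bset =>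
      ‖LinearMap.toContinuousLinearMap (Bas.coord i)‖
    have hM0 : 0 ≤ M := by
      obtain ⟨i₀⟩ := (inferInstance : Nonempty ↥bset)
      refine le_trans (norm_nonneg (LinearMap.toContinuousLinearMap (Bas.coord i₀))) ?_
      exact Finset.le_sup' (fun i : ↥bset =>
        ‖LinearMap.toContinuousLinearMap (Bas.coord i)‖) (Finset.mem_univ i₀)
    let ν : ℝ := Finset.univ.inf' (Finset.univ_nonempty) fun i : ↥bset => ‖(i : ι → ℝ)‖
    have hν0 : 0 < ν := by
      rw [Finset.lt_inf'_iff]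
      intro i _
      exact norm_pos_iff.2 (hS0 _ (hbsub i.2))
    set w : ℕ := Fintype.card ↥bset with hwdef
    set δ : ℝ := min (ν/2) (min (θ/(w+1)) (1/((M+1)*(w+1)))) with hδdef
    have hδ0 : 0 < δ := by
      apply lt_min (by positivity) (lt_min (by positivity) (by positivity))
    have hδθ : δ ≤ θ/(w+1) := le_trans (min_le_right _ _) (min_le_left _ _)
    have hδM : δ ≤ 1/((M+1)*(w+1)) := le_trans (min_le_right _ _) (min_le_right _ _)
    have hδν : ∀ i : ↥bset, δ < ‖(i : ι → ℝ)‖ := by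
      intro i
      calc δ ≤ ν/2 := min_le_left _ _
      _ < ν := by linarith
      _ ≤ ‖(i : ι → ℝ)‖ := Finset.inf'_le _ (Finset.mem_univ i)
    have hw1 : (1:ℝ) ≤ (w:ℝ) := by
      have : 0 < w := Fintype.card_pos
      exact_mod_cast this
    -- near inverses
    have hNI : ∀ i : ↥bset, ∃ r', IsRes lam r' ∧ ‖(i : ι → ℝ) + r'‖ ≤ δ ∧
        ‖r'‖ ≤ ‖(i : ι → ℝ)‖ + δ := by
      intro i
      exact near_inverse (hbsub i.2).1 (le_trans (hbsub i.2).2 hθ4) hδ0 (hδν i)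
    choose u' hu'res hu'sum hu'norm using hNI
    -- the small correction g
    set g : ι → ℝ := ∑ i : ↥bset, ((i : ι → ℝ) + u' i) with hgdef
    have hgres : IsRes lam g :=
      isRes_sum Finset.univ_nonempty _ (fun i _ => isRes_add (hbsub i.2).1 (hu'res i))
    have hgnorm : ‖g‖ ≤ w * δ := by
      calc ‖g‖ ≤ ∑ i : ↥bset, ‖(i : ι → ℝ) + u' i‖ := norm_sum_le _ _
      _ ≤ ∑ _i : ↥bset, δ := Finset.sum_le_sum (fun i _ => hu'sum i)
      _ = w * δ := by rw [Finset.sum_const, Finset.card_univ, nsmul_eq_mul]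
    have hwδθ : w * δ ≤ θ := by
      calc (w:ℝ) * δ ≤ w * (θ/(w+1)) := by
            apply mul_le_mul_of_nonneg_left hδθ (by positivity)
      _ ≤ θ := by
            rw [← mul_div_assoc, div_le_iff₀ (by positivity : (0:ℝ) < (w:ℝ)+1)]
            nlinarith [hθ0.le]
    have hgW : g ∈ W := by
      rw [hWS]
      exact Submodule.subset_span ⟨hgres, hgnorm.trans hwδθ⟩
    set gW : ↥W := ⟨g, hgW⟩ with hgWdef
    -- coordinates of g
    set crepr : ↥bset → ℝ := fun i => Bas.repr gW i with hcdef
    have hg_expand : ∑ i : ↥bset, crepr i • (i : ι → ℝ) = g := by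
      have h1 := Bas.sum_repr gW
      have h2 := congrArg (Subtype.val : ↥W → (ι → ℝ)) h1
      simp only [Submodule.coe_sum, SetLike.val_smul] at h2
      have h3 : ∀ i : ↥bset, ((Bas i : ↥W) : ι → ℝ) = (i : ι → ℝ) := fun i =>
        congrArg Subtype.val (Module.Basis.span_apply hli i)
      calc ∑ i : ↥bset, crepr i • (i : ι → ℝ)
          = ∑ i : ↥bset, (Bas.repr gW i) • ((Bas i : ↥W) : ι → ℝ) :=
            Finset.sum_congr rfl (fun i _ => by rw [h3 i])
      _ = g := h2
    have hcbound : ∀ i : ↥bset, crepr i < 1 := by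
      intro i
      have h1 : |crepr i| ≤ ‖LinearMap.toContinuousLinearMap (Bas.coord i)‖ * ‖gW‖ := by
        have := (LinearMap.toContinuousLinearMap (Bas.coord i)).le_opNorm gW
        simpa [hcdef, Real.norm_eq_abs, Module.Basis.coord_apply] using this
      have h2 : ‖gW‖ = ‖g‖ := rfl
      have h3 : |crepr i| ≤ M * (w * δ) := by
        calc |crepr i| ≤ ‖LinearMap.toContinuousLinearMap (Bas.coord i)‖ * ‖gW‖ := h1
        _ ≤ M * (w * δ) := by
            apply mul_le_mul (Finset.le_sup' _ (Finset.mem_univ i)) _ (norm_nonneg _) hM0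
            rw [h2]; exact hgnorm
      have h4 : M * (w * δ) < 1 := by
        have h5 : (w:ℝ) * δ ≤ w * (1/((M+1)*(w+1))) :=
          mul_le_mul_of_nonneg_left hδM (by positivity)
        have h6 : (w:ℝ) * (1/((M+1)*(w+1))) < 1/(M+1) := by
          rw [mul_one_div, div_lt_div_iff₀ (by positivity) (by positivity)]
          nlinarith
        have h7 : M * (w * δ) ≤ M * (1/(M+1)) := by
          apply mul_le_mul_of_nonneg_left _ hM0
          linarith
        have h8 : M * (1/(M+1)) < 1 := by
          rw [mul_one_div, div_lt_one (by positivity)]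
          linarith
        linarith
      calc crepr i ≤ |crepr i| := le_abs_self _
      _ ≤ M * (w * δ) := h3
      _ < 1 := h4
    -- total weight
    set τ : ℝ := ∑ i : ↥bset, ((1 - crepr i) + 1) with hτdef
    have hτ0 : 0 < τ := by
      apply Finset.sum_pos _ Finset.univ_nonempty
      intro i _
      have := hcbound i
      linarith
    -- choose residual data
    choose Q hQ A hA using fun i : ↥bset => (hbsub i.2).1
    choose Q' hQ' A' hA' using hu'res
    -- assemble
    set p : ℕ := Fintype.card (↥bset ⊕ ↥bset) with hpdef
    set e : Fin p ≃ (↥bset ⊕ ↥bset) := (Fintype.equivFin (↥bset ⊕ ↥bset)).symm with hedef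
    set qfun : (↥bset ⊕ ↥bset) → ℕ := Sum.elim Q Q' with hqfdef
    set afun : (↥bset ⊕ ↥bset) → ι → ℤ := Sum.elim A A' with hafdef
    set sfun : (↥bset ⊕ ↥bset) → ℝ := Sum.elim (fun i => (1 - crepr i)/τ) (fun _ => 1/τ) with hsfdef
    refine ⟨p, fun i => qfun (e i), fun i => afun (e i), fun i => sfun (e i), ?_, ?_, ?_, ?_, ?_⟩
    · intro i
      show 0 < qfun (e i)
      rcases e i with i' | i'
      · exact hQ i'
      · exact hQ' i'
    · intro i
      show (0:ℝ) ≤ sfun (e i)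
      rcases e i with i' | i'
      · simp only [hsfdef, Sum.elim_inl]
        exact div_nonneg (by linarith [hcbound i']) hτ0.le
      · simp only [hsfdef, Sum.elim_inr]
        exact div_nonneg zero_le_one hτ0.le
    · show ∑ i, sfun (e i) = 1
      rw [Equiv.sum_comp e sfun]
      rw [hsfdef, Fintype.sum_sum_type]
      simp only [Sum.elim_inl, Sum.elim_inr]
      rw [← Finset.sum_div, ← Finset.sum_div, ← add_div, div_eq_one_iff_eq hτ0.ne']
      rw [hτdef, Finset.sum_add_distrib]
    · intro i c
      show |(qfun (e i) : ℝ) * lam c - afun (e i) c| ≤ ε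
      have key : ∀ k : (↥bset ⊕ ↥bset), |(qfun k : ℝ) * lam c - afun k c| ≤ ε := by
        rintro (i' | i')
        · simp only [hqfdef, hafdef, Sum.elim_inl]
          have : (fun c => (Q i' : ℝ) * lam c - A i' c) = ((i' : ι → ℝ)) := (hA i').symm
          have h2 : |(Q i' : ℝ) * lam c - A i' c| = |(i' : ι → ℝ) c| := by rw [← this]
          rw [h2]
          have h3 : |(i' : ι → ℝ) c| ≤ ‖(i' : ι → ℝ)‖ := by
            have := norm_le_pi_norm (i' : ι → ℝ) c
            simpa [Real.norm_eq_abs] using this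
          calc |(i' : ι → ℝ) c| ≤ ‖(i' : ι → ℝ)‖ := h3
          _ ≤ θ := (hbsub i'.2).2
          _ ≤ ε := by linarith
        · simp only [hqfdef, hafdef, Sum.elim_inr]
          have : (fun c => (Q' i' : ℝ) * lam c - A' i' c) = u' i' := (hA' i').symm
          have h2 : |(Q' i' : ℝ) * lam c - A' i' c| = |u' i' c| := by rw [← this]
          rw [h2]
          have h3 : |u' i' c| ≤ ‖u' i'‖ := by
            have := norm_le_pi_norm (u' i') c
            simpa [Real.norm_eq_abs] using this
          have h4 : ‖u' i'‖ ≤ θ + δ := le_trans (hu'norm i') (by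
            have := (hbsub i'.2).2; linarith)
          have h5 : δ ≤ θ := by
            calc δ ≤ θ/(w+1) := hδθ
            _ ≤ θ := by
                rw [div_le_iff₀ (by positivity)]
                nlinarith
          calc |u' i' c| ≤ θ + δ := h3.trans h4
          _ ≤ 2*θ := by linarith
          _ ≤ ε := hθε
      exact key (e i)
    · show ∑ i, sfun (e i) • (fun c => (qfun (e i) : ℝ) * lam c - afun (e i) c) = (0 : ι → ℝ)
      rw [Equiv.sum_comp e (fun k => sfun k • (fun c => (qfun k : ℝ) * lam c - afun k c))]
      rw [Fintype.sum_sum_type]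
      have hres1 : ∀ i' : ↥bset, (fun c => (qfun (Sum.inl i') : ℝ) * lam c -
          afun (Sum.inl i') c) = ((i' : ι → ℝ)) := by
        intro i'
        simp only [hqfdef, hafdef, Sum.elim_inl]
        exact (hA i').symm
      have hres2 : ∀ i' : ↥bset, (fun c => (qfun (Sum.inr i') : ℝ) * lam c -
          afun (Sum.inr i') c) = u' i' := by
        intro i'
        simp only [hqfdef, hafdef, Sum.elim_inr]
        exact (hA' i').symm
      have step : ∀ i' : ↥bset,
          sfun (Sum.inl i') • (fun c => (qfun (Sum.inl i') : ℝ) * lam c - afun (Sum.inl i') c)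
          = ((1 - crepr i')/τ) • ((i' : ι → ℝ)) := by
        intro i'
        rw [hres1 i']
        simp only [hsfdef, Sum.elim_inl]
      have step2 : ∀ i' : ↥bset,
          sfun (Sum.inr i') • (fun c => (qfun (Sum.inr i') : ℝ) * lam c - afun (Sum.inr i') c)
          = (1/τ) • (u' i') := by
        intro i'
        rw [hres2 i']
        simp only [hsfdef, Sum.elim_inr]
      rw [Finset.sum_congr rfl (fun i' _ => step i'), Finset.sum_congr rfl (fun i' _ => step2 i')]
      have expand : (∑ i' : ↥bset, ((1 - crepr i')/τ) • ((i' : ι → ℝ)))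
          + ∑ i' : ↥bset, (1/τ) • (u' i')
          = (1/τ) • ((∑ i' : ↥bset, (1 - crepr i') • ((i' : ι → ℝ))) + ∑ i' : ↥bset, u' i') := by
        have e1 : ∑ i' : ↥bset, ((1 - crepr i')/τ) • ((i' : ι → ℝ))
            = (1/τ) • ∑ i' : ↥bset, (1 - crepr i') • ((i' : ι → ℝ)) := by
          rw [Finset.smul_sum]
          refine Finset.sum_congr rfl (fun i' _ => ?_)
          rw [smul_smul]
          congr 1
          ring
        have e2 : ∑ i' : ↥bset, (1/τ) • (u' i') = (1/τ) • ∑ i' : ↥bset, u' i' :=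
          (Finset.smul_sum).symm
        rw [e1, e2, ← smul_add]
      have inner : (∑ i' : ↥bset, (1 - crepr i') • ((i' : ι → ℝ))) + ∑ i' : ↥bset, u' i'
          = (0 : ι → ℝ) := by
        have h1 : ∑ i' : ↥bset, (1 - crepr i') • ((i' : ι → ℝ))
            = (∑ i' : ↥bset, ((i' : ι → ℝ))) - ∑ i' : ↥bset, crepr i' • ((i' : ι → ℝ)) := by
          rw [← Finset.sum_sub_distrib]
          apply Finset.sum_congr rfl
          intro i' _
          rw [sub_smul, one_smul]
        rw [h1, hg_expand]
        have h2 : g = (∑ i' : ↥bset, ((i' : ι → ℝ))) + ∑ i' : ↥bset, u' i' := by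
          rw [hgdef, Finset.sum_add_distrib]
        rw [h2]
        abel
      rw [expand, inner, smul_zero]

/-- **BCHM, Lemma 3.7.7 (Diophantine approximation).**  Let `C` be a rational polytope
in `ℝⁿ` (with the rational lattice `ℤⁿ` and the sup norm), realised as the convex hull
of a finite set `T` of rational points.  Fix a positive integer `k` and a positive real
`α`.  Then for every `v ∈ C` there are points `v₁, …, v_p ∈ C` and positive integers
`m₁, …, m_p`, each divisible by `k`, such that `v` is a convex linear combination of
the `vᵢ`, each `(mᵢ/k)·vᵢ` is integral, and `‖vᵢ - v‖ < α/mᵢ` for every `i`. -/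
theorem diophantine_approximation_in_rational_polytope {n : ℕ} (k : ℕ) (hk : 0 < k)
    (α : ℝ) (hα : 0 < α) (T : Finset (Fin n → ℝ))
    (hT : ∀ x ∈ T, ∀ i, ∃ q : ℚ, x i = (q : ℝ))
    (v : Fin n → ℝ) (hv : v ∈ convexHull ℝ (T : Set (Fin n → ℝ))) :
    ∃ (p : ℕ) (vs : Fin p → (Fin n → ℝ)) (ms : Fin p → ℕ),
      (∀ i, vs i ∈ convexHull ℝ (T : Set (Fin n → ℝ))) ∧
      (∀ i, 0 < ms i ∧ k ∣ ms i) ∧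
      (∃ t : Fin p → ℝ, (∀ i, 0 ≤ t i) ∧ ∑ i, t i = 1 ∧ v = ∑ i, t i • vs i) ∧
      (∀ i j, ∃ z : ℤ, ((ms i : ℝ) / (k : ℝ)) * vs i j = (z : ℝ)) ∧
      (∀ i, ‖vs i - v‖ < α / (ms i : ℝ)) := by
  classical
  have hTne : T.Nonempty := by
    by_contra h
    rw [Finset.not_nonempty_iff_eq_empty] at h
    rw [h] at hv
    simp at hv
  rw [Finset.convexHull_eq] at hv
  obtain ⟨wfun, hw0, hw1, hwv⟩ := hv
  have hv' : v = ∑ x ∈ T, wfun x • x := by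
    rw [← hwv, Finset.centerMass_eq_of_sum_1 _ _ hw1]
    rfl
  set lam : ↥T → ℝ := fun x => wfun x with hlamdef
  have hlam0 : ∀ x : ↥T, 0 ≤ lam x := fun x => hw0 _ x.2
  have hlam1 : ∑ x : ↥T, lam x = 1 := by
    rw [hlamdef, Finset.sum_coe_sort T wfun]
    exact hw1
  have hv'' : v = ∑ x : ↥T, lam x • (x : Fin n → ℝ) := by
    rw [hv', ← Finset.sum_coe_sort T (fun x => wfun x • x)]
  -- common denominator
  have hQex : ∀ (x : ↥T) (j : Fin n), ∃ q : ℚ, (x : Fin n → ℝ) j = q :=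
    fun x j => hT x x.2 j
  choose ρ hρ using hQex
  set N : ℕ := ∏ x : ↥T, ∏ j, (ρ x j).den with hNdef
  have hN0 : 0 < N := by
    apply Finset.prod_pos
    intro x _
    apply Finset.prod_pos
    intro j _
    exact (ρ x j).pos
  have hNint : ∀ (x : ↥T) (j : Fin n), ∃ z : ℤ, (N:ℝ) * (x : Fin n → ℝ) j = z := by
    intro x j
    have d1 : (ρ x j).den ∣ ∏ j', (ρ x j').den := Finset.dvd_prod_of_mem _ (Finset.mem_univ j)
    have d2 : (∏ j', (ρ x j').den) ∣ N := by
      rw [hNdef]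
      exact Finset.dvd_prod_of_mem _ (Finset.mem_univ x)
    obtain ⟨m, hm⟩ := d1.trans d2
    refine ⟨(m:ℤ) * (ρ x j).num, ?_⟩
    rw [hρ x j]
    have hcast : ((ρ x j : ℚ) : ℝ) = ((ρ x j).num : ℝ) / ((ρ x j).den : ℝ) := by
      rw [Rat.cast_def]
    rw [hcast, hm]
    have hd : (((ρ x j).den) : ℝ) ≠ 0 := Nat.cast_ne_zero.2 (ρ x j).den_nz
    push_cast
    field_simp
  choose zint hzint using hNint
  set Btot : ℝ := ∑ x : ↥T, ‖(x : Fin n → ℝ)‖ with hBdef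
  have hB0 : 0 ≤ Btot := Finset.sum_nonneg fun x _ => norm_nonneg _
  set d : ℕ := Fintype.card ↥T with hddef
  have hd1 : 1 ≤ d := by
    rw [hddef]
    have : 0 < T.card := Finset.card_pos.2 hTne
    simpa [Fintype.card_coe] using this
  set ε₀ : ℝ := min (1/(2*(d:ℝ))) (α / ((k*N)*(Btot+1))) with hε₀def
  have hkN0 : (0:ℝ) < (k:ℝ)*(N:ℝ) := by
    have : (0:ℝ) < (k:ℝ) := by exact_mod_cast hk
    have h2 : (0:ℝ) < (N:ℝ) := by exact_mod_cast hN0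
    positivity
  have hε₀0 : 0 < ε₀ := by
    apply lt_min
    · have : (0:ℝ) < (d:ℝ) := by exact_mod_cast hd1
      positivity
    · have : (0:ℝ) < (Btot+1) := by linarith
      have h2 : (0:ℝ) < ((k:ℝ)*(N:ℝ))*(Btot+1) := by positivity
      have h3 : ((k*N : ℕ):ℝ) = (k:ℝ)*(N:ℝ) := by push_cast; ring
      rw [show ((k*N : ℝ)) = (k:ℝ)*(N:ℝ) from by push_cast; ring] at *
      positivity
  obtain ⟨p, qf, af, sf, hqf, hsf0, hsf1, hbound, hzero⟩ := main_comb lam hε₀0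
  have hε₀d : ε₀ ≤ 1/(2*(d:ℝ)) := min_le_left _ _
  have hε₀α : ε₀ ≤ α / ((k*N)*(Btot+1)) := min_le_right _ _
  -- positivity of q's as reals
  have hqfR : ∀ i, (0:ℝ) < (qf i : ℝ) := fun i => by exact_mod_cast hqf i
  -- the integers af are nonnegative and sum to qf
  have haf0 : ∀ i x, (0:ℤ) ≤ af i x := by
    intro i x
    have hb := abs_le.1 (hbound i x)
    have h2 : (0:ℝ) ≤ (qf i : ℝ) * lam x := mul_nonneg (hqfR i).le (hlam0 x)
    have hdR : (1:ℝ) ≤ (d:ℝ) := by exact_mod_cast hd1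
    have hε₀1 : ε₀ < 1 := by
      have h1 : 1/(2*(d:ℝ)) ≤ 1/2 := by
        apply one_div_le_one_div_of_le
        · norm_num
        · linarith
      linarith [hε₀d]
    have h3 : ((af i x : ℤ):ℝ) > -1 := by linarith [hb.2]
    have h4 : (-1 : ℤ) < af i x := by exact_mod_cast h3
    omega
  have hsum_af : ∀ i, ∑ x : ↥T, af i x = (qf i : ℤ) := by
    intro i
    set m : ℤ := (∑ x : ↥T, af i x) - qf i with hmdef
    have hdR : (1:ℝ) ≤ (d:ℝ) := by exact_mod_cast hd1
    have hmR : |(m:ℝ)| < 1 := by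
      have heq : (m:ℝ) = -(∑ x : ↥T, ((qf i : ℝ) * lam x - af i x)) := by
        push_cast [hmdef]
        rw [Finset.sum_sub_distrib, ← Finset.mul_sum, hlam1]
        ring
      rw [heq, abs_neg]
      calc |∑ x : ↥T, ((qf i : ℝ) * lam x - af i x)|
          ≤ ∑ x : ↥T, |(qf i : ℝ) * lam x - af i x| := Finset.abs_sum_le_sum_abs _ _
      _ ≤ ∑ _x : ↥T, ε₀ := Finset.sum_le_sum (fun x _ => hbound i x)
      _ = d * ε₀ := by rw [Finset.sum_const, Finset.card_univ, ← hddef, nsmul_eq_mul]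
      _ ≤ d * (1/(2*d)) := mul_le_mul_of_nonneg_left hε₀d (by positivity)
      _ < 1 := by
          rw [mul_one_div, div_lt_one (by positivity)]
          linarith
    have hm0 : m = 0 := by
      have h4 : ((|m| : ℤ) : ℝ) < 1 := by rw [Int.cast_abs]; exact hmR
      have h5 : |m| < 1 := by exact_mod_cast h4
      have := abs_lt.1 h5
      omega
    omega
  set Z : ℝ := ∑ i, sf i * qf i with hZdef
  have hZ1 : (1:ℝ) ≤ Z := by
    rw [hZdef, ← hsf1]
    apply Finset.sum_le_sum
    intro i _
    have h1 : (1:ℝ) ≤ (qf i : ℝ) := by exact_mod_cast hqf i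
    nlinarith [hsf0 i]
  have hZ0 : (0:ℝ) < Z := lt_of_lt_of_le one_pos hZ1
  have hsafR : ∀ i, ∑ x : ↥T, (af i x : ℝ) = (qf i : ℝ) := by
    intro i
    exact_mod_cast congrArg (Int.cast : ℤ → ℝ) (hsum_af i)
  refine ⟨p, (fun i => ∑ x : ↥T, ((af i x : ℝ)/(qf i : ℝ)) • (x : Fin n → ℝ)),
    (fun i => k * N * qf i), ?_, ?_, ?_, ?_, ?_⟩
  · intro i
    show (∑ x : ↥T, ((af i x : ℝ)/(qf i : ℝ)) • (x : Fin n → ℝ)) ∈ _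
    have hws : ∑ x : ↥T, (af i x : ℝ)/(qf i : ℝ) = 1 := by
      rw [← Finset.sum_div, hsafR i]
      exact div_self (hqfR i).ne'
    have hmem := Finset.centerMass_mem_convexHull (Finset.univ : Finset ↥T)
        (w := fun x => (af i x : ℝ)/(qf i : ℝ)) (z := fun x => (x : Fin n → ℝ))
        (fun x _ => div_nonneg (by exact_mod_cast haf0 i x) (hqfR i).le)
        (by rw [hws]; exact one_pos) (fun x _ => x.2)
    rwa [Finset.centerMass_eq_of_sum_1 _ _ hws] at hmem
  · intro i
    constructor
    · show 0 < k * N * qf i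
      exact Nat.mul_pos (Nat.mul_pos hk hN0) (hqf i)
    · exact ⟨N * qf i, by ring⟩
  · refine ⟨fun i => sf i * qf i / Z, fun i => ?_, ?_, ?_⟩
    · exact div_nonneg (mul_nonneg (hsf0 i) (hqfR i).le) hZ0.le
    · rw [← Finset.sum_div, ← hZdef]
      exact div_self hZ0.ne'
    · have hcoeff : ∀ x : ↥T, ∑ i, (sf i * qf i / Z) * ((af i x : ℝ)/(qf i : ℝ)) = lam x := by
        intro x
        have hz := congrFun hzero x
        simp only [Finset.sum_apply, Pi.smul_apply, smul_eq_mul, Pi.zero_apply] at hz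
        have h1 : ∀ i, (sf i * qf i / Z) * ((af i x : ℝ)/(qf i : ℝ))
            = sf i * (af i x : ℝ) / Z := by
          intro i
          have hq' : (qf i:ℝ) ≠ 0 := (hqfR i).ne'
          have hZ' : Z ≠ 0 := hZ0.ne'
          field_simp
        rw [Finset.sum_congr rfl (fun i _ => h1 i), ← Finset.sum_div]
        have h4 : ∑ i, sf i * ((qf i:ℝ) * lam x) = Z * lam x := by
          rw [hZdef, Finset.sum_mul]
          exact Finset.sum_congr rfl (fun i _ => by ring)
        have h3 : ∑ i, (sf i * ((qf i:ℝ) * lam x) - sf i * (af i x : ℝ)) = 0 := by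
          rw [← hz]
          exact Finset.sum_congr rfl (fun i _ => by ring)
        rw [Finset.sum_sub_distrib] at h3
        have h2 : ∑ i, sf i * (af i x:ℝ) = Z * lam x := by linarith
        rw [h2]
        field_simp
      calc v = ∑ x : ↥T, lam x • (x : Fin n → ℝ) := hv''
      _ = ∑ x : ↥T, (∑ i, (sf i * qf i / Z) * ((af i x : ℝ)/(qf i : ℝ))) • (x : Fin n → ℝ) :=
          Finset.sum_congr rfl (fun x _ => by rw [hcoeff x])
      _ = ∑ x : ↥T, ∑ i, ((sf i * qf i / Z) * ((af i x : ℝ)/(qf i : ℝ))) • (x : Fin n → ℝ) :=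
          Finset.sum_congr rfl (fun x _ => by rw [Finset.sum_smul])
      _ = ∑ i, ∑ x : ↥T, ((sf i * qf i / Z) * ((af i x : ℝ)/(qf i : ℝ))) • (x : Fin n → ℝ) :=
          Finset.sum_comm
      _ = ∑ i, (sf i * qf i / Z) • ∑ x : ↥T, ((af i x : ℝ)/(qf i : ℝ)) • (x : Fin n → ℝ) := by
          refine Finset.sum_congr rfl (fun i _ => ?_)
          rw [Finset.smul_sum]
          exact Finset.sum_congr rfl (fun x _ => by rw [smul_smul])
  · intro i j
    show ∃ z : ℤ, (((k * N * qf i : ℕ):ℝ)/(k:ℝ)) *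
        (∑ x : ↥T, ((af i x : ℝ)/(qf i : ℝ)) • (x : Fin n → ℝ)) j = (z:ℝ)
    refine ⟨∑ x : ↥T, af i x * zint x j, ?_⟩
    have hkR : (0:ℝ) < (k:ℝ) := by exact_mod_cast hk
    have hcast : ((k*N*qf i : ℕ):ℝ)/(k:ℝ) = (N:ℝ)*(qf i:ℝ) := by
      push_cast
      field_simp
    rw [hcast]
    have hvsj : (∑ x : ↥T, ((af i x:ℝ)/(qf i:ℝ)) • (x : Fin n → ℝ)) j
        = ∑ x : ↥T, ((af i x:ℝ)/(qf i:ℝ)) * (x : Fin n → ℝ) j := by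
      simp [Finset.sum_apply]
    rw [hvsj, Finset.mul_sum]
    push_cast
    refine Finset.sum_congr rfl (fun x _ => ?_)
    calc (N:ℝ)*(qf i:ℝ) * (((af i x:ℝ)/(qf i:ℝ)) * (x : Fin n → ℝ) j)
        = (af i x:ℝ) * ((N:ℝ) * (x : Fin n → ℝ) j) := by
          have hq' : (qf i:ℝ) ≠ 0 := (hqfR i).ne'
          field_simp
    _ = (af i x:ℝ) * (zint x j : ℝ) := by rw [hzint x j]
  · intro i
    show ‖(∑ x : ↥T, ((af i x : ℝ)/(qf i : ℝ)) • (x : Fin n → ℝ)) - v‖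
        < α / ((k * N * qf i : ℕ):ℝ)
    have hms : ((k*N*qf i:ℕ):ℝ) = (k:ℝ)*(N:ℝ)*(qf i:ℝ) := by push_cast; ring
    rw [hms]
    have hdiff : (∑ x : ↥T, ((af i x:ℝ)/(qf i:ℝ)) • (x : Fin n → ℝ)) - v
        = ∑ x : ↥T, (((af i x:ℝ)/(qf i:ℝ)) - lam x) • (x : Fin n → ℝ) := by
      rw [hv'', ← Finset.sum_sub_distrib]
      exact Finset.sum_congr rfl (fun x _ => by rw [sub_smul])
    rw [hdiff]
    have hterm : ∀ x : ↥T, ‖(((af i x:ℝ)/(qf i:ℝ)) - lam x) • (x : Fin n → ℝ)‖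
        ≤ (ε₀/(qf i:ℝ)) * ‖(x : Fin n → ℝ)‖ := by
      intro x
      rw [norm_smul, Real.norm_eq_abs]
      apply mul_le_mul_of_nonneg_right _ (norm_nonneg _)
      have hb := hbound i x
      have habs : |(af i x:ℝ)/(qf i:ℝ) - lam x|
          = |(qf i:ℝ)*lam x - (af i x:ℝ)| / (qf i:ℝ) := by
        rw [← abs_neg, show -((af i x:ℝ)/(qf i:ℝ) - lam x)
          = ((qf i:ℝ)*lam x - (af i x:ℝ))/(qf i:ℝ) from by
            have hq' : (qf i:ℝ) ≠ 0 := (hqfR i).ne'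
            field_simp; ring,
          abs_div, abs_of_pos (hqfR i)]
      rw [habs]
      exact (div_le_div_iff_of_pos_right (hqfR i)).2 hb
    calc ‖∑ x : ↥T, (((af i x:ℝ)/(qf i:ℝ)) - lam x) • (x : Fin n → ℝ)‖
        ≤ ∑ x : ↥T, ‖(((af i x:ℝ)/(qf i:ℝ)) - lam x) • (x : Fin n → ℝ)‖ := norm_sum_le _ _
    _ ≤ ∑ x : ↥T, (ε₀/(qf i:ℝ)) * ‖(x : Fin n → ℝ)‖ := Finset.sum_le_sum (fun x _ => hterm x)
    _ = (ε₀/(qf i:ℝ)) * Btot := by rw [← Finset.mul_sum]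
    _ < α / ((k:ℝ)*(N:ℝ)*(qf i:ℝ)) := by
        have h2 : ε₀ * Btot ≤ (α / (((k:ℝ)*(N:ℝ))*(Btot+1))) * Btot :=
          mul_le_mul_of_nonneg_right hε₀α hB0
        have h3 : (α / (((k:ℝ)*(N:ℝ))*(Btot+1))) * Btot < α/((k:ℝ)*(N:ℝ)) := by
          rw [div_mul_eq_mul_div, div_lt_div_iff₀ (by positivity) hkN0]
          nlinarith
        have h1 : ε₀ * Btot < α/((k:ℝ)*(N:ℝ)) := lt_of_le_of_lt h2 h3
        calc (ε₀/(qf i:ℝ)) * Btot = (ε₀*Btot)/(qf i:ℝ) := by ring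
        _ < (α/((k:ℝ)*(N:ℝ)))/(qf i:ℝ) := (div_lt_div_iff_of_pos_right (hqfR i)).2 h1
        _ = α / ((k:ℝ)*(N:ℝ)*(qf i:ℝ)) := by rw [div_div]
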